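/- Let X be a separable unital C*-algebra with (metrizable) state space E, and let 𝔗 be a *-automorphism of the C*-algebra C(E;X) whose fixed-point algebra contains C(E;ℂ)·1. Then 𝔗 is state-dependent pointwise: defining T^ρ(A) := [𝔗(A)](ρ) for the constant function A ∈ X ⊆ C(E;X), each T^ρ is a *-automorphism of X and [𝔗(f)](ρ) = T^ρ(f(ρ)) for all f ∈ C(E;X) and ρ ∈ E. -/

import Mathlib

open scoped ComplexOrder

/-- The state space of a unital C*-algebra `X`. -/
def stateSpace (X : Type*) [NormedRing X] [StarRing X] [NormedAlgebra ℂ X] :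
    Set (WeakDual ℂ X) :=
  {ρ | (∀ a : X, 0 ≤ ρ (star a * a)) ∧ ρ 1 = 1}

section Aux

variable {X : Type*} [NormedRing X] [StarRing X] [CStarRing X]
    [NormedAlgebra ℂ X] [StarModule ℂ X] [CompleteSpace X]

/-- Every state is norm-bounded by 1. -/
lemma stateSpace_norm_apply_le (ρ : WeakDual ℂ X) (hρ : ρ ∈ stateSpace X) (x : X) :
    ‖ρ x‖ ≤ ‖x‖ := by
  letI : CStarAlgebra X :=
    { ‹NormedRing X›, ‹StarRing X›, ‹CStarRing X›, ‹NormedAlgebra ℂ X›,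
      ‹StarModule ℂ X›, ‹CompleteSpace X› with }
  letI : PartialOrder X := CStarAlgebra.spectralOrder X
  letI : StarOrderedRing X := CStarAlgebra.spectralOrderedRing X
  obtain ⟨hpos, hone⟩ := hρ
  -- positivity of `ρ` on all nonnegative elements
  have hnn : ∀ a : X, 0 ≤ a → 0 ≤ ρ a := by
    intro a ha
    rw [StarOrderedRing.nonneg_iff] at ha
    induction ha using AddSubmonoid.closure_induction with
    | mem x hx => obtain ⟨s, rfl⟩ := hx; exact hpos s
    | zero => simp
    | add x y _ _ hx hy => rw [map_add]; exact add_nonneg hx hy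
  -- expansion of positive squares at shifted vectors
  have expand : ∀ (y : X) (c : ℂ), ρ (star (y + c • 1) * (y + c • 1)) =
      ρ (star y * y) + c * ρ (star y) + (starRingEnd ℂ) c * ρ y + c * (starRingEnd ℂ) c := by
    intro y c
    have h1 : star (y + c • 1) * (y + c • 1) =
        star y * y + c • star y + (starRingEnd ℂ) c • y + (c * (starRingEnd ℂ) c) • (1 : X) := by
      simp only [star_add, star_smul, star_one, add_mul, mul_add, smul_add, mul_smul_comm,
        mul_one, smul_mul_assoc, one_mul, smul_smul, Complex.star_def]
      abel
    rw [h1]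
    simp only [map_add, map_smul, smul_eq_mul, hone, mul_one]
  -- hermiticity
  have herm : ∀ y : X, ρ (star y) = starRingEnd ℂ (ρ y) := by
    intro y
    have e1 : 0 ≤ ρ (star y * y) := hpos y
    have e2 : 0 ≤ ρ (star y * y) + 1 * ρ (star y) + (starRingEnd ℂ) 1 * ρ y
        + 1 * (starRingEnd ℂ) 1 := by rw [← expand y 1]; exact hpos _
    have e3 : 0 ≤ ρ (star y * y) + Complex.I * ρ (star y)
        + (starRingEnd ℂ) Complex.I * ρ y + Complex.I * (starRingEnd ℂ) Complex.I := by
      rw [← expand y Complex.I]; exact hpos _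
    rw [Complex.le_def] at e1 e2 e3
    simp only [map_one, one_mul, mul_one, Complex.conj_I, Complex.add_re, Complex.add_im,
      Complex.mul_re, Complex.mul_im, Complex.I_re, Complex.I_im, Complex.one_re,
      Complex.one_im, Complex.zero_re, Complex.zero_im, Complex.neg_re, Complex.neg_im,
      mul_neg, neg_mul] at e1 e2 e3
    apply Complex.ext
    · simp only [Complex.conj_re]; nlinarith [e1.1, e1.2, e2.1, e2.2, e3.1, e3.2]
    · simp only [Complex.conj_im]; nlinarith [e1.1, e1.2, e2.1, e2.2, e3.1, e3.2]
  -- Cauchy–Schwarz against `1`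
  have CS : ‖ρ x‖ ^ 2 ≤ (ρ (star x * x)).re := by
    have e := expand x (-(ρ x))
    have e' : 0 ≤ ρ (star x * x) - (ρ x) * (starRingEnd ℂ) (ρ x) := by
      have h0 := hpos (x + (-(ρ x)) • 1)
      rw [e, herm x] at h0
      convert h0 using 1
      ring
    rw [Complex.le_def] at e'
    have : ((ρ x) * (starRingEnd ℂ) (ρ x)).re = ‖ρ x‖ ^ 2 := by
      rw [Complex.mul_conj']
      norm_cast
    simp only [Complex.sub_re, Complex.sub_im, Complex.zero_re, Complex.zero_im] at e'
    nlinarith [e'.1]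
  -- the upper bound coming from `star x * x ≤ ‖x‖ ^ 2`
  have hA : (ρ (star x * x)).re ≤ ‖x‖ ^ 2 := by
    have hle : star x * x ≤ algebraMap ℝ X (‖x‖ ^ 2) :=
      CStarAlgebra.star_mul_le_algebraMap_norm_sq
    have h0 : 0 ≤ ρ (algebraMap ℝ X (‖x‖ ^ 2) - star x * x) := hnn _ (sub_nonneg.mpr hle)
    have halg : ρ (algebraMap ℝ X (‖x‖ ^ 2)) = (‖x‖ ^ 2 : ℝ) := by
      rw [Algebra.algebraMap_eq_smul_one, ← algebraMap_smul ℂ (‖x‖ ^ 2) (1 : X), map_smul,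
        hone, smul_eq_mul, mul_one, Complex.coe_algebraMap]
    rw [map_sub, halg, Complex.le_def] at h0
    have h1 := h0.1
    simp only [Complex.zero_re, Complex.sub_re, Complex.ofReal_re] at h1
    linarith
  nlinarith [norm_nonneg (ρ x), norm_nonneg x, CS, hA]

lemma stateSpace_isClosed : IsClosed (stateSpace X) := by
  have h1 : IsClosed {ρ : WeakDual ℂ X | ρ 1 = 1} :=
    isClosed_eq (WeakDual.eval_continuous (1 : X)) continuous_const
  have h2 : IsClosed {ρ : WeakDual ℂ X | ∀ a : X, 0 ≤ ρ (star a * a)} := by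
    rw [Set.setOf_forall]
    refine isClosed_iInter fun a => ?_
    have hset : IsClosed {z : ℂ | 0 ≤ z} := by
      have : {z : ℂ | 0 ≤ z} = Complex.re ⁻¹' Set.Ici 0 ∩ Complex.im ⁻¹' {0} := by
        ext z
        simp [Complex.le_def, eq_comm]
      rw [this]
      exact (isClosed_Ici.preimage Complex.continuous_re).inter
        (isClosed_singleton.preimage Complex.continuous_im)
    exact hset.preimage (WeakDual.eval_continuous (star a * a))
  have : stateSpace X
      = {ρ : WeakDual ℂ X | ∀ a : X, 0 ≤ ρ (star a * a)} ∩ {ρ | ρ 1 = 1} := rfl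
  rw [this]
  exact h2.inter h1

lemma stateSpace_isCompact : IsCompact (stateSpace X) := by
  refine WeakDual.isCompact_of_bounded_of_closed ?_ stateSpace_isClosed
  refine Bornology.IsBounded.subset (Metric.isBounded_closedBall (x := (0 : StrongDual ℂ X))
    (r := 1)) ?_
  intro ρ hρ
  show (show StrongDual ℂ X from ρ) ∈ Metric.closedBall (0 : StrongDual ℂ X) 1
  rw [Metric.mem_closedBall, dist_zero_right]
  exact ContinuousLinearMap.opNorm_le_bound _ zero_le_one fun x => by
    rw [one_mul]; exact stateSpace_norm_apply_le _ hρ x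

lemma stateSpace_const_mul (𝔗 : C(↥(stateSpace X), X) ≃⋆ₐ[ℂ] C(↥(stateSpace X), X))
    (ρ : ↥(stateSpace X)) (a b : X) :
    𝔗 (ContinuousMap.const _ (a * b)) ρ
      = 𝔗 (ContinuousMap.const _ a) ρ * 𝔗 (ContinuousMap.const _ b) ρ := by
  have h1 : (ContinuousMap.const ↥(stateSpace X) (a * b)) =
      ContinuousMap.const _ a * ContinuousMap.const _ b := by ext ρ'; simp
  rw [h1, map_mul, ContinuousMap.mul_apply]

lemma stateSpace_const_add (𝔗 : C(↥(stateSpace X), X) ≃⋆ₐ[ℂ] C(↥(stateSpace X), X))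
    (ρ : ↥(stateSpace X)) (a b : X) :
    𝔗 (ContinuousMap.const _ (a + b)) ρ
      = 𝔗 (ContinuousMap.const _ a) ρ + 𝔗 (ContinuousMap.const _ b) ρ := by
  have h1 : (ContinuousMap.const ↥(stateSpace X) (a + b)) =
      ContinuousMap.const _ a + ContinuousMap.const _ b := by ext ρ'; simp
  rw [h1, map_add, ContinuousMap.add_apply]

lemma stateSpace_const_star (𝔗 : C(↥(stateSpace X), X) ≃⋆ₐ[ℂ] C(↥(stateSpace X), X))
    (ρ : ↥(stateSpace X)) (a : X) :
    𝔗 (ContinuousMap.const _ (star a)) ρ = star (𝔗 (ContinuousMap.const _ a) ρ) := by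
  have h1 : (ContinuousMap.const ↥(stateSpace X) (star a)) =
      star (ContinuousMap.const _ a) := by ext ρ'; simp
  rw [h1, map_star, ContinuousMap.star_apply]

lemma stateSpace_const_smul (𝔗 : C(↥(stateSpace X), X) ≃⋆ₐ[ℂ] C(↥(stateSpace X), X))
    (ρ : ↥(stateSpace X)) (c : ℂ) (a : X) :
    𝔗 (ContinuousMap.const _ (c • a)) ρ = c • 𝔗 (ContinuousMap.const _ a) ρ := by
  have h1 : (ContinuousMap.const ↥(stateSpace X) (c • a)) =
      c • ContinuousMap.const _ a := by ext ρ'; simp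
  rw [h1, map_smul, ContinuousMap.smul_apply]

lemma stateSpace_const_inv_left (𝔗 : C(↥(stateSpace X), X) ≃⋆ₐ[ℂ] C(↥(stateSpace X), X))
    (hmain' : ∀ (f : C(↥(stateSpace X), X)) (ρ : ↥(stateSpace X)),
      𝔗.symm f ρ = 𝔗.symm (ContinuousMap.const _ (f ρ)) ρ)
    (ρ : ↥(stateSpace X)) (a : X) :
    𝔗.symm (ContinuousMap.const _ (𝔗 (ContinuousMap.const _ a) ρ)) ρ = a := by
  rw [← hmain' (𝔗 (ContinuousMap.const _ a)) ρ, 𝔗.symm_apply_apply]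
  rfl

lemma stateSpace_const_inv_right (𝔗 : C(↥(stateSpace X), X) ≃⋆ₐ[ℂ] C(↥(stateSpace X), X))
    (hmain : ∀ (f : C(↥(stateSpace X), X)) (ρ : ↥(stateSpace X)),
      𝔗 f ρ = 𝔗 (ContinuousMap.const _ (f ρ)) ρ)
    (ρ : ↥(stateSpace X)) (a : X) :
    𝔗 (ContinuousMap.const _ (𝔗.symm (ContinuousMap.const _ a) ρ)) ρ = a := by
  rw [← hmain (𝔗.symm (ContinuousMap.const _ a)) ρ, 𝔗.apply_symm_apply]
  rfl

/-- The pointwise *-automorphism of `X` extracted from a *-automorphism of `C(E; X)`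
that localizes at states. -/
noncomputable def stateSpacePointwiseAut
    (𝔗 : C(↥(stateSpace X), X) ≃⋆ₐ[ℂ] C(↥(stateSpace X), X))
    (hmain : ∀ (f : C(↥(stateSpace X), X)) (ρ : ↥(stateSpace X)),
      𝔗 f ρ = 𝔗 (ContinuousMap.const _ (f ρ)) ρ)
    (hmain' : ∀ (f : C(↥(stateSpace X), X)) (ρ : ↥(stateSpace X)),
      𝔗.symm f ρ = 𝔗.symm (ContinuousMap.const _ (f ρ)) ρ)
    (ρ : ↥(stateSpace X)) : X ≃⋆ₐ[ℂ] X where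
  toFun a := 𝔗 (ContinuousMap.const _ a) ρ
  invFun a := 𝔗.symm (ContinuousMap.const _ a) ρ
  left_inv a := stateSpace_const_inv_left 𝔗 hmain' ρ a
  right_inv a := stateSpace_const_inv_right 𝔗 hmain ρ a
  map_mul' a b := stateSpace_const_mul 𝔗 ρ a b
  map_add' a b := stateSpace_const_add 𝔗 ρ a b
  map_star' a := stateSpace_const_star 𝔗 ρ a
  map_smul' c a := stateSpace_const_smul 𝔗 ρ c a

end Aux

/-- Let `X` be a separable unital C*-algebra with state space `E` and
`𝔗` a *-automorphism of `C(E; X)` whose fixed-point algebra contains the classical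
subalgebra `C(E; ℂ) · 1`.  Then `𝔗` is state-dependent pointwise: setting
`T^ρ (a) := [𝔗(a)](ρ)` on constant functions, each `T^ρ` is a *-automorphism of `X`
and `[𝔗(f)](ρ) = T^ρ (f ρ)` for all `f ∈ C(E; X)` and `ρ ∈ E`. -/
theorem stateDependent_pointwise_of_fixing_classical_algebra
    (X : Type*) [NormedRing X] [StarRing X] [CStarRing X]
    [NormedAlgebra ℂ X] [StarModule ℂ X] [CompleteSpace X]
    [TopologicalSpace.SeparableSpace X]
    (𝔗 : C(↥(stateSpace X), X) ≃⋆ₐ[ℂ] C(↥(stateSpace X), X))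
    (hfix : ∀ g : C(↥(stateSpace X), X),
      (∀ ρ : ↥(stateSpace X), ∃ c : ℂ, g ρ = c • (1 : X)) → 𝔗 g = g) :
    ∃ T : ↥(stateSpace X) → X ≃⋆ₐ[ℂ] X,
      (∀ (ρ : ↥(stateSpace X)) (a : X), T ρ a = 𝔗 (ContinuousMap.const _ a) ρ) ∧
      (∀ (f : C(↥(stateSpace X), X)) (ρ : ↥(stateSpace X)), 𝔗 f ρ = T ρ (f ρ)) := by
  haveI : CompactSpace ↥(stateSpace X) :=
    isCompact_iff_compactSpace.mp (stateSpace_isCompact (X := X))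
  -- the key localization lemma: if `f` vanishes at `ρ`, then so does `S f` for any
  -- *-automorphism `S` fixing the classical subalgebra.
  have key : ∀ (S : C(↥(stateSpace X), X) ≃⋆ₐ[ℂ] C(↥(stateSpace X), X)),
      (∀ g : C(↥(stateSpace X), X),
        (∀ ρ : ↥(stateSpace X), ∃ c : ℂ, g ρ = c • (1 : X)) → S g = g) →
      ∀ (f : C(↥(stateSpace X), X)) (ρ : ↥(stateSpace X)), f ρ = 0 → S f ρ = 0 := by
    intro S hS f ρ hfρ
    letI : CStarAlgebra X :=
      { ‹NormedRing X›, ‹StarRing X›, ‹CStarRing X›, ‹NormedAlgebra ℂ X›,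
        ‹StarModule ℂ X›, ‹CompleteSpace X› with }
    rw [← norm_le_zero_iff]
    refine le_of_forall_pos_le_add ?_
    intro ε hε
    -- the localizing bump function
    set h : ↥(stateSpace X) → ℝ := fun ρ' => max 0 (1 - ‖f ρ'‖ / ε) with hh
    have hcont : Continuous h :=
      continuous_const.max (continuous_const.sub ((map_continuous f).norm.div_const ε))
    set g : C(↥(stateSpace X), X) :=
      ⟨fun ρ' => ((h ρ' : ℝ) : ℂ) • (1 : X),
        (Complex.continuous_ofReal.comp hcont).smul continuous_const⟩ with hgdef
    have hg : S g = g := hS g fun ρ' => ⟨((h ρ' : ℝ) : ℂ), rfl⟩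
    have hgρ : g ρ = 1 := by
      show ((h ρ : ℝ) : ℂ) • (1 : X) = 1
      have h1 : h ρ = 1 := by simp [hh, hfρ]
      rw [h1]; simp
    have hval : S f ρ = S (g * f) ρ := by
      rw [map_mul, hg, ContinuousMap.mul_apply, hgρ, one_mul]
    have hpt : ∀ ρ', ‖(g * f) ρ'‖ ≤ ε := by
      intro ρ'
      rw [ContinuousMap.mul_apply]
      show ‖(((h ρ' : ℝ) : ℂ) • (1 : X)) * f ρ'‖ ≤ ε
      have hhp : (0 : ℝ) ≤ h ρ' := le_max_left _ _
      rw [smul_mul_assoc, one_mul, norm_smul, Complex.norm_real, Real.norm_eq_abs,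
        abs_of_nonneg hhp]
      by_cases hc' : ‖f ρ'‖ ≤ ε
      · have h1 : h ρ' ≤ 1 := by
          have : (0 : ℝ) ≤ ‖f ρ'‖ / ε := div_nonneg (norm_nonneg _) hε.le
          rw [hh]
          exact max_le zero_le_one (by linarith)
        calc h ρ' * ‖f ρ'‖ ≤ 1 * ε := mul_le_mul h1 hc' (norm_nonneg _) zero_le_one
          _ = ε := one_mul ε
      · have h0 : h ρ' = 0 := by
          rw [hh]
          refine max_eq_left ?_
          have : 1 ≤ ‖f ρ'‖ / ε := (one_le_div hε).mpr (le_of_not_ge hc')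
          linarith
        rw [h0, zero_mul]
        exact hε.le
    calc ‖S f ρ‖ = ‖S (g * f) ρ‖ := by rw [hval]
      _ ≤ ‖S (g * f)‖ := ContinuousMap.norm_coe_le_norm _ _
      _ = ‖g * f‖ := StarAlgEquiv.norm_map S _
      _ ≤ ε := (ContinuousMap.norm_le _ hε.le).mpr hpt
      _ = 0 + ε := (zero_add ε).symm
  -- the inverse also fixes the classical subalgebra
  have hfix' : ∀ g : C(↥(stateSpace X), X),
      (∀ ρ : ↥(stateSpace X), ∃ c : ℂ, g ρ = c • (1 : X)) → 𝔗.symm g = g := by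
    intro g hg
    conv_lhs => rw [← hfix g hg]
    exact 𝔗.symm_apply_apply g
  -- localization of automorphisms at points
  have main : ∀ (S : C(↥(stateSpace X), X) ≃⋆ₐ[ℂ] C(↥(stateSpace X), X)),
      (∀ g : C(↥(stateSpace X), X),
        (∀ ρ : ↥(stateSpace X), ∃ c : ℂ, g ρ = c • (1 : X)) → S g = g) →
      ∀ (f : C(↥(stateSpace X), X)) (ρ : ↥(stateSpace X)),
        S f ρ = S (ContinuousMap.const _ (f ρ)) ρ := by
    intro S hS f ρ
    have h0 := key S hS (f - ContinuousMap.const _ (f ρ)) ρ (by simp)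
    rwa [map_sub, ContinuousMap.sub_apply, sub_eq_zero] at h0
  exact ⟨stateSpacePointwiseAut 𝔗 (main 𝔗 hfix) (main 𝔗.symm hfix'),
    fun ρ a => rfl, fun f ρ => main 𝔗 hfix f ρ⟩
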